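/- Let q ≥ 2 be an integer, β ≥ 0 and h < 0, and define g : [0, 1/(q−1)] → ℝ by g(θ) = (e^{βθ−h} − 1)/((q−1) e^{βθ−h} + 1). Then g is nondecreasing and concave on [0, 1/(q−1)], g(0) > 0, and g(θ) < 1 for all θ ∈ [0, 1/(q−1)]. In particular, the equation g(θ) = θ has exactly one solution in [0, 1/(q−1)]. -/

import Mathlib

open Real Set

noncomputable section

/-- The fixed-point map `g(θ) = (e^{βθ-h}-1)/((q-1)e^{βθ-h}+1)` for the symmetric
minimizers of the `q`-state Potts mean-field free energy in a negative field. -/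
noncomputable def gNeg (q : ℕ) (β h θ : ℝ) : ℝ :=
  (Real.exp (β * θ - h) - 1) / (((q : ℝ) - 1) * Real.exp (β * θ - h) + 1)

section aux

variable {q : ℕ} {β h : ℝ}

lemma gNeg_a_pos (hq : 2 ≤ q) : (1 : ℝ) ≤ (q : ℝ) - 1 := by
  have : (2 : ℝ) ≤ (q : ℝ) := by exact_mod_cast hq
  linarith

lemma gNeg_den_pos (hq : 2 ≤ q) (θ : ℝ) :
    0 < ((q : ℝ) - 1) * Real.exp (β * θ - h) + 1 := by
  have ha := gNeg_a_pos hq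
  have := Real.exp_pos (β * θ - h)
  nlinarith

lemma gNeg_hasDerivAt (hq : 2 ≤ q) (θ : ℝ) :
    HasDerivAt (gNeg q β h)
      ((q : ℝ) * β * Real.exp (β * θ - h) /
        (((q : ℝ) - 1) * Real.exp (β * θ - h) + 1) ^ 2) θ := by
  have hE : HasDerivAt (fun θ : ℝ => Real.exp (β * θ - h))
      (Real.exp (β * θ - h) * β) θ := by
    have : HasDerivAt (fun θ : ℝ => β * θ - h) β θ := by
      simpa using ((hasDerivAt_id θ).const_mul β).sub_const h
    exact this.exp
  have hden := gNeg_den_pos (β := β) (h := h) hq θ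
  have hnum : HasDerivAt (fun θ : ℝ => Real.exp (β * θ - h) - 1)
      (Real.exp (β * θ - h) * β) θ := hE.sub_const 1
  have hD : HasDerivAt (fun θ : ℝ => ((q : ℝ) - 1) * Real.exp (β * θ - h) + 1)
      (((q : ℝ) - 1) * (Real.exp (β * θ - h) * β)) θ :=
    (hE.const_mul _).add_const 1
  have := hnum.div hD hden.ne'
  refine this.congr_deriv ?_
  congr 1
  ring

lemma gNeg_deriv (hq : 2 ≤ q) :
    deriv (gNeg q β h) = fun θ =>
      (q : ℝ) * β * Real.exp (β * θ - h) /
        (((q : ℝ) - 1) * Real.exp (β * θ - h) + 1) ^ 2 := by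
  funext θ
  exact (gNeg_hasDerivAt hq θ).deriv

lemma gNeg_deriv_hasDerivAt (hq : 2 ≤ q) (θ : ℝ) :
    HasDerivAt (fun θ =>
      (q : ℝ) * β * Real.exp (β * θ - h) /
        (((q : ℝ) - 1) * Real.exp (β * θ - h) + 1) ^ 2)
      (((q : ℝ) * β * (Real.exp (β * θ - h) * β) *
          (((q : ℝ) - 1) * Real.exp (β * θ - h) + 1) ^ 2 -
        (q : ℝ) * β * Real.exp (β * θ - h) *
          (2 * (((q : ℝ) - 1) * Real.exp (β * θ - h) + 1) ^ 1 *
            (((q : ℝ) - 1) * (Real.exp (β * θ - h) * β)))) /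
        ((((q : ℝ) - 1) * Real.exp (β * θ - h) + 1) ^ 2) ^ 2) θ := by
  have hE : HasDerivAt (fun θ : ℝ => Real.exp (β * θ - h))
      (Real.exp (β * θ - h) * β) θ := by
    have : HasDerivAt (fun θ : ℝ => β * θ - h) β θ := by
      simpa using ((hasDerivAt_id θ).const_mul β).sub_const h
    exact this.exp
  have hden := gNeg_den_pos (β := β) (h := h) hq θ
  have hnum : HasDerivAt (fun θ : ℝ => (q : ℝ) * β * Real.exp (β * θ - h))
      ((q : ℝ) * β * (Real.exp (β * θ - h) * β)) θ := hE.const_mul _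
  have hD : HasDerivAt (fun θ : ℝ => ((q : ℝ) - 1) * Real.exp (β * θ - h) + 1)
      (((q : ℝ) - 1) * (Real.exp (β * θ - h) * β)) θ :=
    (hE.const_mul _).add_const 1
  have hD2 : HasDerivAt (fun θ : ℝ => (((q : ℝ) - 1) * Real.exp (β * θ - h) + 1) ^ 2)
      (2 * (((q : ℝ) - 1) * Real.exp (β * θ - h) + 1) ^ 1 *
        (((q : ℝ) - 1) * (Real.exp (β * θ - h) * β))) θ := hD.pow 2
  exact hnum.div hD2 (by positivity)

lemma gNeg_lt_inv (hq : 2 ≤ q) (θ : ℝ) : gNeg q β h θ < 1 / ((q : ℝ) - 1) := by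
  have ha := gNeg_a_pos hq
  have hden := gNeg_den_pos (β := β) (h := h) hq θ
  have hE := Real.exp_pos (β * θ - h)
  rw [gNeg, div_lt_div_iff₀ hden (by linarith)]
  nlinarith

end aux

/-- Properties of the negative-field fixed-point map `g` (Lemma 5.5). -/
theorem potts_gNeg_properties (q : ℕ) (hq : 2 ≤ q) (β h : ℝ) (hβ : 0 ≤ β) (hh : h < 0) :
    MonotoneOn (gNeg q β h) (Icc (0 : ℝ) (1 / ((q : ℝ) - 1))) ∧
    ConcaveOn ℝ (Icc (0 : ℝ) (1 / ((q : ℝ) - 1))) (gNeg q β h) ∧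
    0 < gNeg q β h 0 ∧
    (∀ θ ∈ Icc (0 : ℝ) (1 / ((q : ℝ) - 1)), gNeg q β h θ < 1) ∧
    (∃! θ, θ ∈ Icc (0 : ℝ) (1 / ((q : ℝ) - 1)) ∧ gNeg q β h θ = θ) := by
  have ha : (1 : ℝ) ≤ (q : ℝ) - 1 := gNeg_a_pos hq
  set a : ℝ := (q : ℝ) - 1 with ha_def
  have hden : ∀ θ : ℝ, 0 < a * Real.exp (β * θ - h) + 1 := gNeg_den_pos hq
  -- E > 1 for θ ≥ 0
  have hE1 : ∀ θ : ℝ, 0 ≤ θ → 1 < Real.exp (β * θ - h) := by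
    intro θ hθ
    have : 0 < β * θ - h := by nlinarith
    simpa using Real.exp_lt_exp.2 (by linarith : (0:ℝ) < β * θ - h)
  -- monotone
  have hmono : MonotoneOn (gNeg q β h) (Icc (0 : ℝ) (1 / a)) := by
    intro x hx y hy hxy
    have hEx : Real.exp (β * x - h) ≤ Real.exp (β * y - h) := by
      apply Real.exp_le_exp.2
      have : β * x ≤ β * y := mul_le_mul_of_nonneg_left hxy hβ
      linarith
    have h1 := hden x
    have h2 := hden y
    have hpx := Real.exp_pos (β * x - h)
    rw [gNeg, gNeg, div_le_div_iff₀ h1 h2]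
    nlinarith
  -- continuity
  have hcont : Continuous (gNeg q β h) := by
    apply Continuous.div
    · fun_prop
    · fun_prop
    · intro θ; exact (hden θ).ne'
  -- concavity
  have hconc : ConcaveOn ℝ (Icc (0 : ℝ) (1 / a)) (gNeg q β h) := by
    apply concaveOn_of_deriv2_nonpos (convex_Icc _ _) hcont.continuousOn
    · intro x _
      exact (gNeg_hasDerivAt hq x).differentiableAt.differentiableWithinAt
    · intro x _
      rw [gNeg_deriv hq]
      exact (gNeg_deriv_hasDerivAt hq x).differentiableAt.differentiableWithinAt
    · intro x hx
      rw [interior_Icc] at hx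
      have hx0 : (0:ℝ) ≤ x := le_of_lt hx.1
      have hE := hE1 x hx0
      have hd := hden x
      have hEp := Real.exp_pos (β * x - h)
      have : deriv^[2] (gNeg q β h) x = deriv (deriv (gNeg q β h)) x := by
        simp [Function.iterate_succ, Function.comp]
      rw [this, gNeg_deriv hq, (gNeg_deriv_hasDerivAt hq x).deriv]
      apply div_nonpos_of_nonpos_of_nonneg _ (by positivity)
      have key : (q : ℝ) * β * (Real.exp (β * x - h) * β) *
            (a * Real.exp (β * x - h) + 1) ^ 2 -
          (q : ℝ) * β * Real.exp (β * x - h) *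
            (2 * (a * Real.exp (β * x - h) + 1) ^ 1 *
              (a * (Real.exp (β * x - h) * β))) =
          (q : ℝ) * β ^ 2 * Real.exp (β * x - h) * (a * Real.exp (β * x - h) + 1) *
            (1 - a * Real.exp (β * x - h)) := by ring
      rw [key]
      apply mul_nonpos_of_nonneg_of_nonpos (by positivity)
      nlinarith
  -- g 0 > 0
  have hg0 : 0 < gNeg q β h 0 := by
    have hE := hE1 0 le_rfl
    exact div_pos (by linarith) (hden 0)
  -- g < 1
  have hlt1 : ∀ θ ∈ Icc (0 : ℝ) (1 / a), gNeg q β h θ < 1 := by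
    intro θ _
    have hE := Real.exp_pos (β * θ - h)
    rw [gNeg, div_lt_one (hden θ)]
    nlinarith
  refine ⟨hmono, hconc, hg0, hlt1, ?_⟩
  -- existence and uniqueness of fixed point
  have hinv_pos : (0:ℝ) < 1 / a := by positivity
  set f : ℝ → ℝ := fun θ => gNeg q β h θ - θ with hf_def
  have hf0 : 0 < f 0 := by simpa [hf_def] using hg0
  have hf1 : f (1 / a) < 0 := by
    have := gNeg_lt_inv (β := β) (h := h) hq (1 / a)
    simp only [hf_def]
    linarith
  have hfc : ContinuousOn f (Icc (0:ℝ) (1 / a)) :=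
    (hcont.sub continuous_id).continuousOn
  have : (0:ℝ) ∈ f '' Icc (0:ℝ) (1 / a) := by
    apply intermediate_value_Icc' (le_of_lt hinv_pos) hfc
    exact ⟨le_of_lt hf1, le_of_lt hf0⟩
  obtain ⟨θ₀, hθ₀, hfθ₀⟩ := this
  -- f concave
  have hfconc : ConcaveOn ℝ (Icc (0 : ℝ) (1 / a)) f := by
    exact hconc.sub (convexOn_id (convex_Icc _ _))
  refine ⟨θ₀, ⟨hθ₀, by simpa [hf_def, sub_eq_zero] using hfθ₀⟩, ?_⟩
  -- uniqueness: at most one zero of f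
  have huniq : ∀ x ∈ Icc (0:ℝ) (1 / a), f x = 0 → ∀ y ∈ Icc (0:ℝ) (1 / a), f y = 0 → x = y := by
    intro x hx hfx y hy hfy
    by_contra hne
    -- wlog x < y: symmetric argument
    have key : ∀ u v : ℝ, u ∈ Icc (0:ℝ) (1/a) → v ∈ Icc (0:ℝ) (1/a) → f u = 0 → f v = 0 →
        u < v → False := by
      intro u v hu hv hfu hfv huv
      have hu0 : 0 < u := by
        rcases lt_or_eq_of_le hu.1 with h' | h'
        · exact h'
        · exfalso; rw [← h'] at hfu; linarith
      have hv0 : 0 < v := lt_trans hu0 huv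
      -- u = (1 - u/v)•0 + (u/v)•v
      set t : ℝ := u / v with ht_def
      have ht0 : 0 < t := div_pos hu0 hv0
      have ht1 : t < 1 := (div_lt_one hv0).2 huv
      have hcomb := hfconc.2 (left_mem_Icc.2 (le_of_lt hinv_pos)) hv
        (by linarith : (0:ℝ) ≤ 1 - t) (le_of_lt ht0) (by ring)
      have hteq : (1 - t) • (0:ℝ) + t • v = u := by
        simp [smul_eq_mul, ht_def]
        field_simp
      rw [hteq] at hcomb
      rw [hfu, hfv] at hcomb
      have : 0 < (1 - t) * f 0 := mul_pos (by linarith) hf0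
      simp [smul_eq_mul] at hcomb
      nlinarith
    rcases lt_or_gt_of_ne hne with h' | h'
    · exact key x y hx hy hfx hfy h'
    · exact key y x hy hx hfy hfx h'
  intro y hy
  have hfy : f y = 0 := by simp [hf_def, hy.2]
  exact huniq y hy.1 hfy θ₀ hθ₀ hfθ₀
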